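/- The quotient module T¹ = Mat(2×3, ℂ[[x1,...,x6]]) / (J(M) + Im g) is zero for M = [[x, y, v],[z, w, u]] over ℂ[[x,y,z,w,v,u]], where J(M) is generated by the six coordinate partial-derivative matrices ∂M/∂x_j and g(A,B) = AM + MB for A ∈ Mat(2×2), B ∈ Mat(3×3) over ℂ[[x,...,u]]. -/

import Mathlib

open Matrix

/-- The generic 2×3 determinantal singularity Ω₁ in ℂ⁶ is rigid: for
M = [[x,y,v],[z,w,u]] over R = ℂ[[x,y,z,w,v,u]], the submodule of Mat(2×3,R)
generated by the six partial-derivative matrices ∂M/∂x_j (the elementary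
matrices) together with all matrices A·M + M·B is everything, i.e.
T¹ = Mat(2×3,R)/(J(M) + Im g) = 0.  Variables: x,y,v in the first row are
X 0, X 1, X 4 and z,w,u are X 2, X 3, X 5. -/
theorem stmt_16 :
    let R := MvPowerSeries (Fin 6) ℂ
    let M : Matrix (Fin 2) (Fin 3) R :=
      !![MvPowerSeries.X 0, MvPowerSeries.X 1, MvPowerSeries.X 4;
         MvPowerSeries.X 2, MvPowerSeries.X 3, MvPowerSeries.X 5]
    Submodule.span R
        ({N : Matrix (Fin 2) (Fin 3) R | ∃ i j, N = Matrix.single i j (1 : R)} ∪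
         {N : Matrix (Fin 2) (Fin 3) R | ∃ (A : Matrix (Fin 2) (Fin 2) R)
            (B : Matrix (Fin 3) (Fin 3) R), N = A * M + M * B})
      = ⊤ := by
  intro R M
  rw [eq_top_iff]
  rintro N -
  rw [Matrix.matrix_eq_sum_single N]
  refine Submodule.sum_mem _ fun i _ => Submodule.sum_mem _ fun j _ => ?_
  have h : Matrix.single i j (N i j) = N i j • Matrix.single i j (1:R) := by
    rw [Matrix.smul_single, smul_eq_mul, mul_one]
  rw [h]
  exact Submodule.smul_mem _ _ (Submodule.subset_span (Or.inl ⟨i, j, rfl⟩))
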